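/- Let n ≥ 1 and let U and V be 2^n × 2^n unitary matrices. For every j ∈ {1,…,n}, there exists a 2 × 2 unitary V_j such that, replacing V by V' := (V_j acting on qubit j, tensored with the identity on the other qubits) · V, the entanglement fidelity satisfies F_e^{(j)}(U,V') ≥ 1/4; equivalently, C_LHST^{(j)}(U, V') ≤ 3/4. -/

import Mathlib

open Matrix Kronecker Complex

noncomputable section

/-- The Hilbert-Schmidt test cost `C_HST(U,V) = 1 - |Tr(V†U)|²/d²` for `d × d` matrices. -/
def CHSTd (d : ℕ) (U V : Matrix (Fin d) (Fin d) ℂ) : ℝ :=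
  1 - ‖(Vᴴ * U).trace‖ ^ 2 / (d : ℝ) ^ 2

/-- The Hilbert-Schmidt test cost for unitaries on `n` qubits (`d = 2^n`). -/
def CHST (n : ℕ) (U V : Matrix (Fin n → Fin 2) (Fin n → Fin 2) ℂ) : ℝ :=
  1 - ‖(Vᴴ * U).trace‖ ^ 2 / ((2 : ℝ) ^ n) ^ 2

/-- The local channel `E_j(ρ) = Tr_{j̄}[ W (ρ_(j) ⊗ I/2^(n-1)) W† ]`, where `ρ` is placed on
qubit `j`, the maximally mixed state on the other qubits, and the partial trace is over all
qubits except `j`.  (The sum over `r` double-counts the assignments of the qubits other than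
`j`, whence the extra factor `1/2`.) -/
def Ej (n : ℕ) (j : Fin n) (W : Matrix (Fin n → Fin 2) (Fin n → Fin 2) ℂ)
    (ρ : Matrix (Fin 2) (Fin 2) ℂ) : Matrix (Fin 2) (Fin 2) ℂ :=
  Matrix.of fun a b =>
    (1 / 2 ^ (n - 1) : ℂ) * (1 / 2) *
      ∑ r : Fin n → Fin 2, ∑ s : Fin n → Fin 2, ∑ t : Fin n → Fin 2,
        (if Function.update s j 0 = Function.update t j 0 then
          W (Function.update r j a) s * ρ (s j) (t j) * star (W (Function.update r j b) t)
        else 0)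

/-- The two-qubit maximally entangled state `|Φ₂⁺⟩ = (|00⟩+|11⟩)/√2`. -/
def phi2 : (Fin 2 × Fin 2) → ℂ := fun p => if p.1 = p.2 then ((1 / Real.sqrt 2 : ℝ) : ℂ) else 0

/-- The projector `|Φ₂⁺⟩⟨Φ₂⁺|`. -/
def phi2Proj : Matrix (Fin 2 × Fin 2) (Fin 2 × Fin 2) ℂ :=
  Matrix.of fun p q => if p.1 = p.2 ∧ q.1 = q.2 then (1 / 2 : ℂ) else 0

/-- `(E ⊗ id)(ρ)` for a map `E` on one-qubit matrices and a two-qubit matrix `ρ`. -/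
def tensorId (E : Matrix (Fin 2) (Fin 2) ℂ → Matrix (Fin 2) (Fin 2) ℂ)
    (ρ : Matrix (Fin 2 × Fin 2) (Fin 2 × Fin 2) ℂ) :
    Matrix (Fin 2 × Fin 2) (Fin 2 × Fin 2) ℂ :=
  Matrix.of fun p q => ∑ a : Fin 2, ∑ b : Fin 2,
    ρ (a, p.2) (b, q.2) * E (Matrix.single a b 1) p.1 q.1

/-- The entanglement fidelity `F_e^(j) = ⟨Φ₂⁺|(E_j ⊗ id)(|Φ₂⁺⟩⟨Φ₂⁺|)|Φ₂⁺⟩`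
(as a complex number), with `W = U V†`. -/
def FeC (n : ℕ) (j : Fin n) (U V : Matrix (Fin n → Fin 2) (Fin n → Fin 2) ℂ) : ℂ :=
  star phi2 ⬝ᵥ (tensorId (Ej n j (U * Vᴴ)) phi2Proj).mulVec phi2

/-- The entanglement fidelity `F_e^(j)` (a real number). -/
def Fe (n : ℕ) (j : Fin n) (U V : Matrix (Fin n → Fin 2) (Fin n → Fin 2) ℂ) : ℝ :=
  (FeC n j U V).re

/-- The local Hilbert-Schmidt cost for qubit `j`: `C_LHST^(j)(U,V) = 1 - F_e^(j)`. -/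
def CLHSTj (n : ℕ) (j : Fin n) (U V : Matrix (Fin n → Fin 2) (Fin n → Fin 2) ℂ) : ℝ :=
  1 - Fe n j U V

/-- The local Hilbert-Schmidt cost `C_LHST(U,V) = (1/n) Σ_j C_LHST^(j)(U,V)`. -/
def CLHST (n : ℕ) (U V : Matrix (Fin n → Fin 2) (Fin n → Fin 2) ℂ) : ℝ :=
  (1 / n : ℝ) * ∑ j : Fin n, CLHSTj n j U V

end

noncomputable section

/-- The one-qubit gate `A` acting on qubit `j`, tensored with the identity on the
remaining qubits of an `n`-qubit register. -/
def oneQubitOn (n : ℕ) (j : Fin n) (A : Matrix (Fin 2) (Fin 2) ℂ) :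
    Matrix (Fin n → Fin 2) (Fin n → Fin 2) ℂ :=
  Matrix.of fun s t =>
    if Function.update s j 0 = Function.update t j 0 then A (s j) (t j) else 0


namespace Stmt11Aux

open Matrix Complex

noncomputable section

variable {n : ℕ}

abbrev R (n : ℕ) (j : Fin n) := { i : Fin n // i ≠ j } → Fin 2

def ee (n : ℕ) (j : Fin n) : (Fin n → Fin 2) ≃ Fin 2 × R n j := Equiv.funSplitAt j (Fin 2)

lemma ee_symm_self (j : Fin n) (a : Fin 2) (f : R n j) : (ee n j).symm (a, f) j = a := by
  simp [ee]

lemma update_ee_symm (j : Fin n) (a b : Fin 2) (f : R n j) :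
    Function.update ((ee n j).symm (a, f)) j b = (ee n j).symm (b, f) := by
  funext i
  rcases eq_or_ne i j with h | h
  · subst h; simp [ee]
  · simp [ee, Function.update, h]

lemma update_zero_iff (j : Fin n) (a b : Fin 2) (f g : R n j) :
    Function.update ((ee n j).symm (a, f)) j 0 = Function.update ((ee n j).symm (b, g)) j 0 ↔
      f = g := by
  rw [update_ee_symm, update_ee_symm, (ee n j).symm.injective.eq_iff, Prod.mk.injEq]
  simp

lemma reindex (j : Fin n) (F : (Fin n → Fin 2) → ℂ) :
    ∑ r, F r = ∑ a : Fin 2, ∑ h : R n j, F ((ee n j).symm (a, h)) := by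
  rw [← Equiv.sum_comp (ee n j).symm F, Fintype.sum_prod_type]

lemma Ej_apply (j : Fin n) (W : Matrix (Fin n → Fin 2) (Fin n → Fin 2) ℂ) (x y : Fin 2) :
    Ej n j W (Matrix.single x y 1) x y =
      (1 / 2 ^ (n - 1) : ℂ) * ∑ f : R n j, ∑ g : R n j,
        W ((ee n j).symm (x, f)) ((ee n j).symm (x, g)) *
          star (W ((ee n j).symm (y, f)) ((ee n j).symm (y, g))) := by
  simp only [Ej, Matrix.of_apply]
  rw [reindex j]
  simp only [fun F => reindex j F]
  simp only [update_zero_iff]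
  simp only [update_ee_symm, ee_symm_self, Matrix.single, Matrix.of_apply,
    ite_and, mul_ite, ite_mul, mul_one, mul_zero, zero_mul]
  simp only [Finset.sum_ite_irrel, Finset.sum_const_zero, Finset.sum_ite_eq,
    Finset.sum_ite_eq', Finset.mem_univ, if_true]
  rw [Fin.sum_univ_two]
  ring

lemma restructure (j : Fin n) (w : Fin 2 → R n j → R n j → ℂ) :
    ∑ f : R n j, ∑ g : R n j, (∑ x : Fin 2, w x f g) * star (∑ y : Fin 2, w y f g)
      = ∑ x : Fin 2, ∑ y : Fin 2, ∑ f : R n j, ∑ g : R n j, w x f g * star (w y f g) := by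
  simp only [Fin.sum_univ_two, star_add, ← Finset.sum_add_distrib]
  refine Finset.sum_congr rfl fun f _ => Finset.sum_congr rfl fun g _ => by ring

lemma feC_eq (j : Fin n) (U V : Matrix (Fin n → Fin 2) (Fin n → Fin 2) ℂ) :
    FeC n j U V = (1 / 4 : ℂ) * (1 / 2 ^ (n - 1)) *
      ∑ f : R n j, ∑ g : R n j,
        (∑ x : Fin 2, (U * Vᴴ) ((ee n j).symm (x, f)) ((ee n j).symm (x, g))) *
          star (∑ y : Fin 2, (U * Vᴴ) ((ee n j).symm (y, f)) ((ee n j).symm (y, g))) := by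
  have h2 : ((1 / Real.sqrt 2 : ℝ) : ℂ) * ((1 / Real.sqrt 2 : ℝ) : ℂ) = 1 / 2 := by
    have hr : (1 / Real.sqrt 2) * (1 / Real.sqrt 2) = (1 / 2 : ℝ) := by
      rw [div_mul_div_comm, one_mul, Real.mul_self_sqrt (by norm_num : (0:ℝ) ≤ 2)]
    rw [← Complex.ofReal_mul, hr]
    push_cast
    ring
  have h2' : (((Real.sqrt 2)⁻¹ : ℝ) : ℂ) ^ 2 = 1 / 2 := by
    rw [sq]; rw [show ((Real.sqrt 2)⁻¹ : ℝ) = 1 / Real.sqrt 2 by rw [one_div]]; exact h2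
  rw [restructure]
  simp only [FeC, dotProduct, mulVec, tensorId, phi2, phi2Proj, Matrix.of_apply,
    Pi.star_apply, apply_ite (star : ℂ → ℂ), star_zero, Complex.star_def, Complex.conj_ofReal,
    Fintype.sum_prod_type, Fin.sum_univ_two]
  simp only [Fin.isValue, show (0 : Fin 2) ≠ 1 by decide, show (1 : Fin 2) ≠ 0 by decide,
    if_true, if_false, ite_true, ite_false, reduceIte,
    mul_zero, zero_mul, mul_one, one_mul, add_zero, zero_add, mul_ite, ite_mul,
    and_true, true_and, and_false, false_and]
  simp only [Ej_apply, Complex.star_def]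
  ring_nf
  rw [h2']
  ring_nf

lemma corrected (j : Fin n) (P : Matrix (Fin 2) (Fin 2) ℂ)
    (U V : Matrix (Fin n → Fin 2) (Fin n → Fin 2) ℂ) (a b : Fin 2) (f g : R n j) :
    (U * (oneQubitOn n j P * V)ᴴ) ((ee n j).symm (a, f)) ((ee n j).symm (b, g)) =
      ∑ c : Fin 2, (U * Vᴴ) ((ee n j).symm (a, f)) ((ee n j).symm (c, g)) * star (P b c) := by
  have hW : U * (oneQubitOn n j P * V)ᴴ = (U * Vᴴ) * (oneQubitOn n j P)ᴴ := by
    rw [Matrix.conjTranspose_mul, ← Matrix.mul_assoc]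
  rw [hW, Matrix.mul_apply]
  rw [reindex j]
  simp only [Matrix.conjTranspose_apply, oneQubitOn, Matrix.of_apply, update_zero_iff,
    ee_symm_self, apply_ite (star : ℂ → ℂ), star_zero, mul_ite, mul_zero]
  simp only [Finset.sum_ite_eq, Finset.mem_univ, if_true]

lemma order4 (j : Fin n) (F : R n j → R n j → Fin 2 → Fin 2 → ℂ) :
    ∑ f : R n j, ∑ g : R n j, ∑ x : Fin 2, ∑ c : Fin 2, F f g x c
      = ∑ x : Fin 2, ∑ f : R n j, ∑ c : Fin 2, ∑ g : R n j, F f g x c :=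
  calc ∑ f : R n j, ∑ g : R n j, ∑ x : Fin 2, ∑ c : Fin 2, F f g x c
      = ∑ f : R n j, ∑ x : Fin 2, ∑ g : R n j, ∑ c : Fin 2, F f g x c :=
        Finset.sum_congr rfl fun f _ => Finset.sum_comm
    _ = ∑ x : Fin 2, ∑ f : R n j, ∑ g : R n j, ∑ c : Fin 2, F f g x c :=
        Finset.sum_comm
    _ = ∑ x : Fin 2, ∑ f : R n j, ∑ c : Fin 2, ∑ g : R n j, F f g x c :=
        Finset.sum_congr rfl fun x _ => Finset.sum_congr rfl fun f _ => Finset.sum_comm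

lemma sum_sq (j : Fin n) (W : Matrix (Fin n → Fin 2) (Fin n → Fin 2) ℂ)
    (hW : W ∈ Matrix.unitaryGroup (Fin n → Fin 2) ℂ) :
    ∑ f : R n j, ∑ g : R n j, ∑ x : Fin 2, ∑ c : Fin 2,
      W ((ee n j).symm (x, f)) ((ee n j).symm (c, g)) *
        star (W ((ee n j).symm (x, f)) ((ee n j).symm (c, g))) = (2 ^ n : ℂ) := by
  have key : ∀ r : Fin n → Fin 2, ∑ s, W r s * star (W r s) = 1 := by
    intro r
    have h1 : W * star W = 1 := (Matrix.mem_unitaryGroup_iff).mp hW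
    have h2 := congrArg (fun M : Matrix (Fin n → Fin 2) (Fin n → Fin 2) ℂ => M r r) h1
    simpa [Matrix.mul_apply, Matrix.star_eq_conjTranspose, Matrix.conjTranspose_apply,
      Matrix.one_apply] using h2
  rw [order4]
  have h3 : ∑ x : Fin 2, ∑ f : R n j, ∑ c : Fin 2, ∑ g : R n j,
      W ((ee n j).symm (x, f)) ((ee n j).symm (c, g)) *
        star (W ((ee n j).symm (x, f)) ((ee n j).symm (c, g)))
      = ∑ r, ∑ s, W r s * star (W r s) := by
    rw [reindex j (fun r => ∑ s, W r s * star (W r s))]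
    refine Finset.sum_congr rfl fun x _ => Finset.sum_congr rfl fun f _ => ?_
    rw [reindex j (fun s => W ((ee n j).symm (x, f)) s * star (W ((ee n j).symm (x, f)) s))]
  rw [h3]
  simp only [key, Finset.sum_const, Finset.card_univ, nsmul_eq_mul, mul_one]
  rw [Fintype.card_fun]
  push_cast
  simp

lemma pauli_alg (B : Fin 2 → Fin 2 → ℂ) :
    (∑ x : Fin 2, ∑ c : Fin 2, B x c * star ((1 : Matrix (Fin 2) (Fin 2) ℂ) x c)) *
        star (∑ x : Fin 2, ∑ c : Fin 2, B x c * star ((1 : Matrix (Fin 2) (Fin 2) ℂ) x c)) +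
      (∑ x : Fin 2, ∑ c : Fin 2, B x c * star ((!![0,1;1,0] : Matrix (Fin 2) (Fin 2) ℂ) x c)) *
        star (∑ x : Fin 2, ∑ c : Fin 2, B x c * star ((!![0,1;1,0] : Matrix (Fin 2) (Fin 2) ℂ) x c)) +
      (∑ x : Fin 2, ∑ c : Fin 2, B x c * star ((!![0,-I;I,0] : Matrix (Fin 2) (Fin 2) ℂ) x c)) *
        star (∑ x : Fin 2, ∑ c : Fin 2, B x c * star ((!![0,-I;I,0] : Matrix (Fin 2) (Fin 2) ℂ) x c)) +
      (∑ x : Fin 2, ∑ c : Fin 2, B x c * star ((!![1,0;0,-1] : Matrix (Fin 2) (Fin 2) ℂ) x c)) *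
        star (∑ x : Fin 2, ∑ c : Fin 2, B x c * star ((!![1,0;0,-1] : Matrix (Fin 2) (Fin 2) ℂ) x c))
      = 2 * ∑ x : Fin 2, ∑ c : Fin 2, B x c * star (B x c) := by
  simp [Fin.sum_univ_two, Matrix.one_apply, Complex.star_def, map_add, _root_.map_mul,
    Complex.conj_I, Complex.conj_conj]
  ring_nf
  simp only [Complex.I_sq]
  ring

lemma pauliX_mem : (!![0,1;1,0] : Matrix (Fin 2) (Fin 2) ℂ) ∈ Matrix.unitaryGroup (Fin 2) ℂ := by
  rw [Matrix.mem_unitaryGroup_iff]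
  ext i k
  fin_cases i <;> fin_cases k <;>
    simp [Matrix.mul_apply, Fin.sum_univ_two, Matrix.star_eq_conjTranspose,
      Matrix.conjTranspose_apply, Matrix.one_apply]

lemma pauliY_mem : (!![0,-I;I,0] : Matrix (Fin 2) (Fin 2) ℂ) ∈ Matrix.unitaryGroup (Fin 2) ℂ := by
  rw [Matrix.mem_unitaryGroup_iff]
  ext i k
  fin_cases i <;> fin_cases k <;>
    simp [Matrix.mul_apply, Fin.sum_univ_two, Matrix.star_eq_conjTranspose,
      Matrix.conjTranspose_apply, Matrix.one_apply, Complex.star_def, Complex.conj_I,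
      Complex.I_mul_I]

lemma pauliZ_mem : (!![1,0;0,-1] : Matrix (Fin 2) (Fin 2) ℂ) ∈ Matrix.unitaryGroup (Fin 2) ℂ := by
  rw [Matrix.mem_unitaryGroup_iff]
  ext i k
  fin_cases i <;> fin_cases k <;>
    simp [Matrix.mul_apply, Fin.sum_univ_two, Matrix.star_eq_conjTranspose,
      Matrix.conjTranspose_apply, Matrix.one_apply]

end

end Stmt11Aux

/-- For unitaries `U`, `V` on `n ≥ 1` qubits and any `j`, there is a
one-qubit unitary `V_j` such that, with `V' = (V_j on qubit j) · V`, the entanglement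
fidelity satisfies `F_e^(j)(U,V') ≥ 1/4`; equivalently `C_LHST^(j)(U,V') ≤ 3/4`. -/
theorem stmt11 (n : ℕ) (hn : 1 ≤ n)
    (U V : Matrix (Fin n → Fin 2) (Fin n → Fin 2) ℂ)
    (hU : U ∈ Matrix.unitaryGroup (Fin n → Fin 2) ℂ)
    (hV : V ∈ Matrix.unitaryGroup (Fin n → Fin 2) ℂ)
    (j : Fin n) :
    ∃ Vj : Matrix (Fin 2) (Fin 2) ℂ, Vj ∈ Matrix.unitaryGroup (Fin 2) ℂ ∧
      Fe n j U (oneQubitOn n j Vj * V) ≥ 1 / 4 ∧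
      CLHSTj n j U (oneQubitOn n j Vj * V) ≤ 3 / 4 := by
  classical
  open Stmt11Aux in
  obtain ⟨m, rfl⟩ : ∃ m, n = m + 1 := ⟨n - 1, (Nat.succ_pred_eq_of_pos hn).symm⟩
  set W := U * Vᴴ with hWdef
  have hWu : W ∈ Matrix.unitaryGroup (Fin (m + 1) → Fin 2) ℂ := by
    refine mul_mem hU ?_
    rw [← Matrix.star_eq_conjTranspose]
    exact Unitary.star_mem hV
  have main : ∀ P : Matrix (Fin 2) (Fin 2) ℂ,
      FeC (m + 1) j U (oneQubitOn (m + 1) j P * V) =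
        (1 / 4 : ℂ) * (1 / 2 ^ m) * ∑ f : R (m + 1) j, ∑ g : R (m + 1) j,
          (∑ x : Fin 2, ∑ c : Fin 2,
            W ((ee (m + 1) j).symm (x, f)) ((ee (m + 1) j).symm (c, g)) * star (P x c)) *
          star (∑ x : Fin 2, ∑ c : Fin 2,
            W ((ee (m + 1) j).symm (x, f)) ((ee (m + 1) j).symm (c, g)) * star (P x c)) := by
    intro P
    rw [feC_eq]
    simp only [corrected, Nat.add_sub_cancel, hWdef]
  have hsum : FeC (m + 1) j U (oneQubitOn (m + 1) j 1 * V)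
      + FeC (m + 1) j U (oneQubitOn (m + 1) j !![0,1;1,0] * V)
      + FeC (m + 1) j U (oneQubitOn (m + 1) j !![0,-I;I,0] * V)
      + FeC (m + 1) j U (oneQubitOn (m + 1) j !![1,0;0,-1] * V) = 1 := by
    rw [main 1, main !![0,1;1,0], main !![0,-I;I,0], main !![1,0;0,-1]]
    rw [← mul_add, ← mul_add, ← mul_add]
    simp only [← Finset.sum_add_distrib]
    have hfg : (∑ f : R (m + 1) j, ∑ g : R (m + 1) j,
        ((∑ x : Fin 2, ∑ c : Fin 2,
            W ((ee (m + 1) j).symm (x, f)) ((ee (m + 1) j).symm (c, g)) *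
              star ((1 : Matrix (Fin 2) (Fin 2) ℂ) x c)) *
          star (∑ x : Fin 2, ∑ c : Fin 2,
            W ((ee (m + 1) j).symm (x, f)) ((ee (m + 1) j).symm (c, g)) *
              star ((1 : Matrix (Fin 2) (Fin 2) ℂ) x c)) +
          (∑ x : Fin 2, ∑ c : Fin 2,
            W ((ee (m + 1) j).symm (x, f)) ((ee (m + 1) j).symm (c, g)) *
              star ((!![0,1;1,0] : Matrix (Fin 2) (Fin 2) ℂ) x c)) *
          star (∑ x : Fin 2, ∑ c : Fin 2,
            W ((ee (m + 1) j).symm (x, f)) ((ee (m + 1) j).symm (c, g)) *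
              star ((!![0,1;1,0] : Matrix (Fin 2) (Fin 2) ℂ) x c)) +
          (∑ x : Fin 2, ∑ c : Fin 2,
            W ((ee (m + 1) j).symm (x, f)) ((ee (m + 1) j).symm (c, g)) *
              star ((!![0,-I;I,0] : Matrix (Fin 2) (Fin 2) ℂ) x c)) *
          star (∑ x : Fin 2, ∑ c : Fin 2,
            W ((ee (m + 1) j).symm (x, f)) ((ee (m + 1) j).symm (c, g)) *
              star ((!![0,-I;I,0] : Matrix (Fin 2) (Fin 2) ℂ) x c)) +
          (∑ x : Fin 2, ∑ c : Fin 2,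
            W ((ee (m + 1) j).symm (x, f)) ((ee (m + 1) j).symm (c, g)) *
              star ((!![1,0;0,-1] : Matrix (Fin 2) (Fin 2) ℂ) x c)) *
          star (∑ x : Fin 2, ∑ c : Fin 2,
            W ((ee (m + 1) j).symm (x, f)) ((ee (m + 1) j).symm (c, g)) *
              star ((!![1,0;0,-1] : Matrix (Fin 2) (Fin 2) ℂ) x c))))
        = ∑ f : R (m + 1) j, ∑ g : R (m + 1) j,
            (2 * ∑ x : Fin 2, ∑ c : Fin 2,
              W ((ee (m + 1) j).symm (x, f)) ((ee (m + 1) j).symm (c, g)) *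
                star (W ((ee (m + 1) j).symm (x, f)) ((ee (m + 1) j).symm (c, g)))) :=
      Finset.sum_congr rfl fun f _ => Finset.sum_congr rfl fun g _ => pauli_alg _
    rw [hfg]
    simp only [← Finset.mul_sum]
    rw [sum_sq j W hWu]
    have h2m : (2 : ℂ) ^ m ≠ 0 := pow_ne_zero _ two_ne_zero
    field_simp
    ring
  have hre : Fe (m + 1) j U (oneQubitOn (m + 1) j 1 * V)
      + Fe (m + 1) j U (oneQubitOn (m + 1) j !![0,1;1,0] * V)
      + Fe (m + 1) j U (oneQubitOn (m + 1) j !![0,-I;I,0] * V)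
      + Fe (m + 1) j U (oneQubitOn (m + 1) j !![1,0;0,-1] * V) = 1 := by
    have := congrArg Complex.re hsum
    simpa [Fe, Complex.add_re] using this
  have finish : ∀ P : Matrix (Fin 2) (Fin 2) ℂ, P ∈ Matrix.unitaryGroup (Fin 2) ℂ →
      (1 / 4 : ℝ) ≤ Fe (m + 1) j U (oneQubitOn (m + 1) j P * V) →
      ∃ Vj : Matrix (Fin 2) (Fin 2) ℂ, Vj ∈ Matrix.unitaryGroup (Fin 2) ℂ ∧
        Fe (m + 1) j U (oneQubitOn (m + 1) j Vj * V) ≥ 1 / 4 ∧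
        CLHSTj (m + 1) j U (oneQubitOn (m + 1) j Vj * V) ≤ 3 / 4 := by
    intro P hP hF
    exact ⟨P, hP, hF, by simp only [CLHSTj]; linarith⟩
  rcases le_or_gt (1 / 4 : ℝ) (Fe (m + 1) j U (oneQubitOn (m + 1) j 1 * V)) with h1 | h1
  · exact finish 1 (one_mem _) h1
  rcases le_or_gt (1 / 4 : ℝ) (Fe (m + 1) j U (oneQubitOn (m + 1) j !![0,1;1,0] * V)) with h2 | h2
  · exact finish _ pauliX_mem h2
  rcases le_or_gt (1 / 4 : ℝ) (Fe (m + 1) j U (oneQubitOn (m + 1) j !![0,-I;I,0] * V)) with h3 | h3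
  · exact finish _ pauliY_mem h3
  exact finish _ pauliZ_mem (by linarith)

end
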